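/- For each τ ∈ ℍ, the map sending [a,b] ∈ (ℝ² \ {0})/±1 to the tangent vector −(a + bτ)²/ℓ_{[a,b]}(τ) ∈ ℂ ≅ T_τℍ is a bijection from (ℝ² \ {0})/±1 onto ℂ \ {0}; that is, for every nonzero ξ ∈ ℂ there exists (a,b) ∈ ℝ², unique up to sign, with ξ = −(a + bτ)²/ℓ_{[a,b]}(τ). -/

import Mathlib

lemma horo_aux_ne (τ : ℂ) (hτ : 0 < τ.im) (a b : ℝ) (h : (a, b) ≠ (0, 0)) :
    (a : ℂ) + (b : ℂ) * τ ≠ 0 := by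
  intro h0
  have him : b * τ.im = 0 := by
    have := congrArg Complex.im h0
    simpa using this
  have hb : b = 0 := by
    rcases mul_eq_zero.1 him with hb | h'
    · exact hb
    · exact absurd h' hτ.ne'
  have hre : a + b * τ.re = 0 := by
    have := congrArg Complex.re h0
    simpa using this
  have ha : a = 0 := by simpa [hb] using hre
  exact h (by simp [ha, hb])

lemma horo_aux_inj (τ : ℂ) (hτ : 0 < τ.im) (a b a' b' : ℝ)
    (h : (a' : ℂ) + (b' : ℂ) * τ = (a : ℂ) + (b : ℂ) * τ) :
    a' = a ∧ b' = b := by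
  have him : b' * τ.im = b * τ.im := by
    have := congrArg Complex.im h
    simpa using this
  have hb : b' = b := mul_right_cancel₀ hτ.ne' him
  have hre : a' + b' * τ.re = a + b * τ.re := by
    have := congrArg Complex.re h
    simpa using this
  have ha : a' = a := by
    rw [hb] at hre; linarith
  exact ⟨ha, hb⟩

/-- For each `τ ∈ ℍ`, the map `[a,b] ↦ −(a + bτ)²/ℓ_{[a,b]}(τ)` is a bijection
from `(ℝ² \ {0})/±1` onto `ℂ \ {0}`: every nonzero `ξ ∈ ℂ` is the horocyclic
vector of some `(a,b) ≠ (0,0)`, uniquely up to sign. Here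
`ℓ_{[a,b]}(τ) = |a + bτ|/√(Im τ)`. -/
theorem horocyclic_vector_bijection (τ : ℂ) (hτ : 0 < τ.im)
    (ξ : ℂ) (hξ : ξ ≠ 0) :
    ∃ a b : ℝ, (a, b) ≠ (0, 0) ∧
      ξ = -((a:ℂ) + (b:ℂ) * τ)^2 / (‖(a:ℂ) + (b:ℂ) * τ‖ / Real.sqrt τ.im : ℝ) ∧
      ∀ a' b' : ℝ, (a', b') ≠ (0, 0) →
        ξ = -((a':ℂ) + (b':ℂ) * τ)^2
              / (‖(a':ℂ) + (b':ℂ) * τ‖ / Real.sqrt τ.im : ℝ) →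
        (a', b') = (a, b) ∨ (a', b') = (-a, -b) := by
  have hv0 : (0:ℝ) < τ.im := hτ
  set s : ℝ := Real.sqrt τ.im with hs
  have hs0 : (0:ℝ) < s := Real.sqrt_pos.2 hv0
  have hs2 : s ^ 2 = τ.im := Real.sq_sqrt hv0.le
  have hr0 : 0 < ‖ξ‖ := norm_pos_iff.2 hξ
  set w : ℂ := -ξ * ((‖ξ‖ : ℝ) : ℂ) / ((τ.im : ℝ) : ℂ) with hw
  have hvC : ((τ.im : ℝ) : ℂ) ≠ 0 := by exact_mod_cast hv0.ne'
  have hrC : ((‖ξ‖ : ℝ) : ℂ) ≠ 0 := by exact_mod_cast hr0.ne'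
  have hw0 : w ≠ 0 := by
    rw [hw]
    exact div_ne_zero (mul_ne_zero (neg_ne_zero.2 hξ) hrC) hvC
  -- key equivalence: for nonzero z, ξ = -z²/(|z|/s) ↔ z² = w
  have key : ∀ z : ℂ, z ≠ 0 →
      (ξ = -z^2 / ((‖z‖ / s : ℝ) : ℂ) ↔ z ^ 2 = w) := by
    intro z hz
    have hza : 0 < ‖z‖ := norm_pos_iff.2 hz
    have hc0 : ((‖z‖ / s : ℝ) : ℂ) ≠ 0 := by
      exact_mod_cast (div_pos hza hs0).ne'
    have hcast : ((‖ξ‖ / s / s : ℝ) : ℂ)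
        = ((‖ξ‖ : ℝ) : ℂ) / ((τ.im : ℝ) : ℂ) := by
      rw [div_div, ← hs2]
      push_cast
      ring
    constructor
    · intro h
      have h1 : ξ * ((‖z‖ / s : ℝ) : ℂ) = -z ^ 2 := by
        rw [h, div_mul_cancel₀ _ hc0]
      -- take absolute values
      have h2 : ‖ξ‖ * (‖z‖ / s) = ‖z‖ ^ 2 := by
        have h3 := congrArg (‖·‖) h1
        simpa [norm_mul, Complex.norm_real, Real.norm_eq_abs, abs_of_pos (div_pos hza hs0),
          abs_of_pos hs0, norm_pow] using h3
      have habs : ‖z‖ = ‖ξ‖ / s := by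
        field_simp at h2 ⊢
        nlinarith [hza, hs0]
      rw [habs, hcast] at h1
      rw [hw]
      linear_combination h1
    · intro h
      have h2 : ‖z‖ ^ 2 = (‖ξ‖ / s) ^ 2 := by
        have h3 := congrArg (‖·‖) h
        rw [hw] at h3
        simp only [norm_pow, norm_div, norm_mul, norm_neg, Complex.norm_real, Real.norm_eq_abs] at h3
        rw [h3, abs_of_pos hr0, abs_of_pos hv0, ← hs2]
        field_simp
      have habs : ‖z‖ = ‖ξ‖ / s := by
        calc ‖z‖ = Real.sqrt (‖z‖ ^ 2) := (Real.sqrt_sq hza.le).symm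
          _ = Real.sqrt ((‖ξ‖ / s) ^ 2) := by rw [h2]
          _ = ‖ξ‖ / s := Real.sqrt_sq (by positivity)
      rw [habs, h, hw, hcast]
      field_simp
  -- existence of a square root of w
  obtain ⟨z, hz2⟩ : ∃ z : ℂ, z ^ 2 = w :=
    Complex.isAlgClosed.exists_pow_nat_eq w (n := 2) (by norm_num)
  have hz0 : z ≠ 0 := by
    intro h
    rw [h] at hz2
    simp only [ne_eq, zero_pow, OfNat.ofNat_ne_zero, not_false_eq_true] at hz2
    exact hw0 hz2.symm
  -- extract (a, b) from z
  set b : ℝ := z.im / τ.im with hb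
  set a : ℝ := z.re - b * τ.re with ha
  have hez : (a : ℂ) + (b : ℂ) * τ = z := by
    apply Complex.ext
    · simp [ha, Complex.add_re, Complex.mul_re]
    · simp only [hb, Complex.add_im, Complex.ofReal_im, Complex.mul_im,
        Complex.ofReal_re, zero_mul, add_zero, zero_add]
      field_simp
  refine ⟨a, b, ?_, ?_, ?_⟩
  · intro hab
    apply hz0
    rw [← hez]
    have ha0 : a = 0 := (Prod.mk.injEq _ _ _ _ ▸ hab : a = 0 ∧ b = 0).1
    have hb0 : b = 0 := (Prod.mk.injEq _ _ _ _ ▸ hab : a = 0 ∧ b = 0).2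
    simp [ha0, hb0]
  · rw [hez]
    exact (key z hz0).2 hz2
  · intro a' b' hab' h'
    have hz'0 : (a' : ℂ) + (b' : ℂ) * τ ≠ 0 := horo_aux_ne τ hτ a' b' hab'
    have hz'2 : ((a' : ℂ) + (b' : ℂ) * τ) ^ 2 = w := (key _ hz'0).1 h'
    have hcases : (a' : ℂ) + (b' : ℂ) * τ = z ∨ (a' : ℂ) + (b' : ℂ) * τ = -z := by
      have hmul : (((a' : ℂ) + (b' : ℂ) * τ) - z) * (((a' : ℂ) + (b' : ℂ) * τ) + z) = 0 := by
        linear_combination hz'2 - hz2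
      rcases mul_eq_zero.1 hmul with h | h
      · left; exact sub_eq_zero.1 h
      · right
        have := add_eq_zero_iff_eq_neg.1 h
        exact this
    rcases hcases with h | h
    · left
      rw [← hez] at h
      obtain ⟨h1, h2⟩ := horo_aux_inj τ hτ a b a' b' h
      simp [h1, h2]
    · right
      rw [← hez] at h
      have h' : (a' : ℂ) + (b' : ℂ) * τ = ((-a : ℝ) : ℂ) + ((-b : ℝ) : ℂ) * τ := by
        rw [h]; push_cast; ring
      obtain ⟨h1, h2⟩ := horo_aux_inj τ hτ (-a) (-b) a' b' h'
      simp [h1, h2]
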